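/- Let I be an independent family of subsets of ℕ and let (A_k)_{k<ω} be a sequence of elements of fil(I). If the set { Y ∈ I : Y ⊆* A_k for all k < ω } is infinite, then there exists B ∈ fil(I) with B ⊆* A_k for all k < ω. -/

import Mathlib

open Set

/-- A family of subsets of ℕ is *independent* if all its members are infinite and
for all finite disjoint subfamilies `𝒜, ℬ ⊆ I` the set `⋂ 𝒜 \ ⋃ ℬ` is infinite. -/
def Indep (I : Set (Set ℕ)) : Prop :=
  (∀ A ∈ I, A.Infinite) ∧
  ∀ 𝒜 ℬ : Finset (Set ℕ), ↑𝒜 ⊆ I → ↑ℬ ⊆ I → Disjoint 𝒜 ℬ →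
    ((⋂ A ∈ 𝒜, A) \ (⋃ B ∈ ℬ, B)).Infinite

/-- `FF I h` : `h` is a finite partial function from `I` to `2`, coded as a finitely
supported `Option Bool`-valued function whose support consists of members of `I`. -/
def FF (I : Set (Set ℕ)) (h : Set ℕ → Option Bool) : Prop :=
  {A | h A ≠ none}.Finite ∧ ∀ A : Set ℕ, h A ≠ none → A ∈ I

/-- The Boolean combination `I^h` : intersection over the domain of `h` of `A` (if
`h A = some false`, i.e. `h(A) = 0`) or of its complement (if `h A = some true`). -/
def BC (h : Set ℕ → Option Bool) : Set ℕ :=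
  ⋂ A ∈ {A : Set ℕ | h A ≠ none}, (if h A = some false then A else Aᶜ)

/-- `ExtFF h h'` : the finite partial function `h'` extends `h`. -/
def ExtFF (h h' : Set ℕ → Option Bool) : Prop :=
  ∀ (A : Set ℕ) (b : Bool), h A = some b → h' A = some b

/-- `I` is densely maximal: for every infinite `X ⊆ ℕ` and every `h ∈ FF(I)` there is
`h' ⊇ h` in `FF(I)` with `I^{h'} \ X` finite or `I^{h'} ∩ X` finite. -/
def DenselyMax (I : Set (Set ℕ)) : Prop :=
  ∀ X : Set ℕ, X.Infinite → ∀ h, FF I h →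
    ∃ h', FF I h' ∧ ExtFF h h' ∧ ((BC h' \ X).Finite ∨ (BC h' ∩ X).Finite)

/-- The density filter `fil(I)`. -/
def densityFil (I : Set (Set ℕ)) : Set (Set ℕ) :=
  {X | ∀ h, FF I h → ∃ h', FF I h' ∧ ExtFF h h' ∧ (BC h' \ X).Finite}

/-- `I` is a maximal independent family. -/
def MaxIndep (I : Set (Set ℕ)) : Prop :=
  Indep I ∧ ¬ ∃ X : Set ℕ, X.Infinite ∧ X ∉ I ∧ Indep (insert X I)

/-- A proper filter on ℕ, viewed as a collection of subsets of ℕ. -/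
def ProperFilter (F : Set (Set ℕ)) : Prop :=
  ∅ ∉ F ∧ Set.univ ∈ F ∧ (∀ X ∈ F, ∀ Y : Set ℕ, X ⊆ Y → Y ∈ F) ∧
    ∀ X ∈ F, ∀ Y ∈ F, X ∩ Y ∈ F

/-- Every member of `F` has infinite intersection with every Boolean combination of `I`. -/
def DiagProp (I : Set (Set ℕ)) (F : Set (Set ℕ)) : Prop :=
  ∀ X ∈ F, ∀ h, FF I h → (X ∩ BC h).Infinite

/-- `F` is a diagonalization filter for `I` : a proper filter, maximal under inclusion
among proper filters all of whose members meet every Boolean combination infinitely. -/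
def DiagFilter (I F : Set (Set ℕ)) : Prop :=
  ProperFilter F ∧ DiagProp I F ∧
    ∀ G : Set (Set ℕ), ProperFilter G → DiagProp I G → F ⊆ G → G = F

/-- `F` is a P-filter (as a collection of sets): every countable subfamily has a
pseudointersection in `F`. -/
def IsPFilter (F : Set (Set ℕ)) : Prop :=
  ∀ A : ℕ → Set ℕ, (∀ n, A n ∈ F) → ∃ B ∈ F, ∀ n, (B \ A n).Finite

/-- `F` is a Q-filter: every partition of ℕ into finite sets has a semiselector in `F`. -/
def IsQFilter (F : Set (Set ℕ)) : Prop :=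
  ∀ J : ℕ → Set ℕ, (∀ n, (J n).Finite) → (∀ m n, m ≠ n → Disjoint (J m) (J n)) →
    (⋃ n, J n) = Set.univ → ∃ A ∈ F, ∀ n, (A ∩ J n).Subsingleton

/-- An independent family is selective if it is densely maximal and its density filter
is Ramsey (both a P-filter and a Q-filter). -/
def Selective (I : Set (Set ℕ)) : Prop :=
  Indep I ∧ DenselyMax I ∧ IsPFilter (densityFil I) ∧ IsQFilter (densityFil I)

theorem statement12 (I : Set (Set ℕ)) (hI : Indep I) (A : ℕ → Set ℕ)
    (hA : ∀ k, A k ∈ densityFil I)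
    (h : {Y ∈ I | ∀ k, (Y \ A k).Finite}.Infinite) :
    ∃ B ∈ densityFil I, ∀ k, (B \ A k).Finite := by
  classical
  set S := {Y ∈ I | ∀ k, (Y \ A k).Finite} with hSdef
  let f := h.natEmbedding
  let Y : ℕ → Set ℕ := fun n => (f n : Set ℕ)
  have hYmem : ∀ n, Y n ∈ S := fun n => (f n).2
  have hYinj : Function.Injective Y := Subtype.coe_injective.comp f.injective
  set B : Set ℕ := ⋃ n, (Y n ∩ ⋂ k ∈ Finset.range (n+1), A k) with hBdef
  refine ⟨B, ?_, ?_⟩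
  · -- B ∈ densityFil I
    intro g hg
    -- find n with Y n outside dom g
    have hD : {A : Set ℕ | g A ≠ none}.Finite := hg.1
    have hfin : {n : ℕ | Y n ∈ {A : Set ℕ | g A ≠ none}}.Finite :=
      hD.preimage (Set.injOn_of_injective hYinj)
    obtain ⟨n, hn⟩ := (Set.Finite.infinite_compl hfin).nonempty
    have hgYn : g (Y n) = none := by
      by_contra hc
      exact hn hc
    set h' : Set ℕ → Option Bool := Function.update g (Y n) (some false) with hh'
    have hdom : {A : Set ℕ | h' A ≠ none} ⊆ insert (Y n) {A : Set ℕ | g A ≠ none} := by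
      intro A hA'
      by_cases hAe : A = Y n
      · exact Or.inl hAe
      · right
        simpa [hh', Function.update_of_ne hAe] using hA'
    refine ⟨h', ⟨hD.insert (Y n) |>.subset hdom, ?_⟩, ?_, ?_⟩
    · intro C hC
      by_cases hCe : C = Y n
      · exact hCe ▸ (hYmem n).1
      · exact hg.2 C (by simpa [hh', Function.update_of_ne hCe] using hC)
    · intro C b hCb
      have hne : C ≠ Y n := by
        rintro rfl; rw [hgYn] at hCb; cases hCb
      simp [hh', Function.update_of_ne hne, hCb]
    · -- BC h' \ B finite
      have hsub : BC h' ⊆ Y n := by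
        intro x hx
        have hmem : Y n ∈ {A : Set ℕ | h' A ≠ none} := by
          simp [hh']
        have hx2 := Set.biInter_subset_of_mem hmem hx
        simpa [hh'] using hx2
      have hsub2 : BC h' \ B ⊆ ⋃ k ∈ Finset.range (n+1), (Y n \ A k) := by
        intro x hx
        have hxY : x ∈ Y n := hsub hx.1
        have hxB : x ∉ B := hx.2
        by_contra hxU
        apply hxB
        refine Set.mem_iUnion.mpr ⟨n, ⟨hxY, ?_⟩⟩
        refine Set.mem_biInter ?_
        intro k hk
        by_contra hxk
        exact hxU (Set.mem_biUnion hk ⟨hxY, hxk⟩)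
      refine Set.Finite.subset ?_ hsub2
      exact Set.Finite.biUnion (Finset.range (n+1)).finite_toSet
        (fun k _ => (hYmem n).2 k)
  · -- ∀ k, (B \ A k).Finite
    intro k
    have hsub : B \ A k ⊆ ⋃ m ∈ Finset.range k, (Y m \ A k) := by
      intro x hx
      obtain ⟨m, hm⟩ := Set.mem_iUnion.mp hx.1
      have hxY : x ∈ Y m := hm.1
      have hxI := hm.2
      have hmk : m < k := by
        by_contra hge
        push_neg at hge
        exact hx.2 (Set.mem_iInter₂.mp hxI k (Finset.mem_range.mpr (Nat.lt_succ_of_le hge)))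
      exact Set.mem_biUnion (Finset.mem_range.mpr hmk) ⟨hxY, hx.2⟩
    exact Set.Finite.subset
      (Set.Finite.biUnion (Finset.range k).finite_toSet (fun m _ => (hYmem m).2 k)) hsub
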